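/- Let σ : ℝ → (0,∞) be continuous and c : ℝ → ℝ continuous, strictly decreasing on ℝ₋, strictly increasing on ℝ₊, with c(x) → ∞ as |x| → ∞. Let q := (q_d + q_u)/2 > 0. For a < 0 define b_a > 0 as the unique positive point with c(b_a) = c(a), and g(a) = ∫ₐ^{b_a}(c(t) - c(a))/σ²(t) dt + q. If σ̂ : ℝ → (0,∞) is continuous with σ̂²(x) > σ²(x) for all x, and ĝ is defined analogously with σ̂, then g(a) < ĝ(a) for all a < 0; consequently, if a* and ã are the unique roots of g = 0 and ĝ = 0 respectively, then ã < a* and b_{ã} > b_{a*}. -/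
import Mathlib


open Real Filter

theorem stmt11 (σ σhat c : ℝ → ℝ)
    (hσcont : Continuous σ) (hσpos : ∀ x, 0 < σ x)
    (hσhatcont : Continuous σhat) (hσhatpos : ∀ x, 0 < σhat x)
    (hcomp : ∀ x, σ x ^ 2 < σhat x ^ 2)
    (hccont : Continuous c)
    (hcanti : StrictAntiOn c (Set.Iic 0)) (hcmono : StrictMonoOn c (Set.Ici 0))
    (hctop : Tendsto c atTop atTop) (hcbot : Tendsto c atBot atTop)
    (q : ℝ) (hq : 0 < q)
    (B : ℝ → ℝ) (hB : ∀ a, a < 0 → 0 < B a ∧ c (B a) = c a)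
    (g ghat : ℝ → ℝ)
    (hg : ∀ a, g a = (∫ t in a..(B a), (c t - c a) / σ t ^ 2) + q)
    (hghat : ∀ a, ghat a = (∫ t in a..(B a), (c t - c a) / σhat t ^ 2) + q) :
    (∀ a, a < 0 → g a < ghat a) ∧
    (∀ astar atil : ℝ, astar < 0 → g astar = 0 → atil < 0 → ghat atil = 0 →
      atil < astar ∧ B astar < B atil) := by
  have hσsq : ∀ x, (0:ℝ) < σ x ^ 2 := fun x => pow_pos (hσpos x) 2
  have hσhatsq : ∀ x, (0:ℝ) < σhat x ^ 2 := fun x => pow_pos (hσhatpos x) 2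
  -- continuity of integrands
  have hcont : ∀ k : ℝ, Continuous fun t => (c t - k) / σ t ^ 2 := fun k =>
    (hccont.sub continuous_const).div (hσcont.pow 2) fun t => (hσsq t).ne'
  have hcontHat : ∀ k : ℝ, Continuous fun t => (c t - k) / σhat t ^ 2 := fun k =>
    (hccont.sub continuous_const).div (hσhatcont.pow 2) fun t => (hσhatsq t).ne'
  -- pointwise bound: c t ≤ c a on [a, B a]
  have hcle : ∀ a, a < 0 → ∀ t ∈ Set.Icc a (B a), c t ≤ c a := by
    intro a ha t ht
    obtain ⟨hBpos, hBc⟩ := hB a ha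
    rcases le_or_gt t 0 with h0 | h0
    · rcases eq_or_lt_of_le ht.1 with h | h
      · rw [← h]
      · exact (hcanti ha.le h0 h).le
    · rcases eq_or_lt_of_le ht.2 with h | h
      · rw [h, hBc]
      · rw [← hBc]
        exact (hcmono h0.le hBpos.le h).le
  -- Part 1
  have part1 : ∀ a, a < 0 → g a < ghat a := by
    intro a ha
    obtain ⟨hBpos, hBc⟩ := hB a ha
    have hab : a < B a := ha.trans hBpos
    rw [hg, hghat]
    have key : (∫ t in a..(B a), (c t - c a) / σ t ^ 2) <
        ∫ t in a..(B a), (c t - c a) / σhat t ^ 2 := by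
      apply intervalIntegral.integral_lt_integral_of_continuousOn_of_le_of_exists_lt hab
        (hcont (c a)).continuousOn (hcontHat (c a)).continuousOn
      · intro x hx
        have h1 : c x - c a ≤ 0 := by
          have := hcle a ha x ⟨hx.1.le, hx.2⟩
          linarith
        rw [div_le_div_iff₀ (hσsq x) (hσhatsq x)]
        nlinarith [hcomp x, hσsq x, hσhatsq x]
      · refine ⟨0, ⟨ha.le, hBpos.le⟩, ?_⟩
        have h1 : c 0 - c a < 0 := by
          have := hcanti ha.le (Set.mem_Iic.mpr le_rfl) ha
          linarith
        rw [div_lt_div_iff₀ (hσsq 0) (hσhatsq 0)]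
        nlinarith [hcomp 0, hσsq 0, hσhatsq 0]
    linarith
  -- monotonicity of ghat on negatives
  have ghat_mono : ∀ a1 a2 : ℝ, a1 < a2 → a2 < 0 → ghat a1 < ghat a2 := by
    intro a1 a2 h12 ha2
    have ha1 : a1 < 0 := h12.trans ha2
    obtain ⟨hb1pos, hb1c⟩ := hB a1 ha1
    obtain ⟨hb2pos, hb2c⟩ := hB a2 ha2
    have hc12 : c a2 < c a1 := hcanti ha1.le ha2.le h12
    have hb21 : B a2 < B a1 := by
      have := (hcmono.lt_iff_lt (Set.mem_Ici.mpr hb2pos.le) (Set.mem_Ici.mpr hb1pos.le)).mp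
      apply this
      rw [hb1c, hb2c]; exact hc12
    have hint : ∀ x y : ℝ, IntervalIntegrable (fun t => (c t - c a1) / σhat t ^ 2)
        MeasureTheory.volume x y := fun x y => (hcontHat (c a1)).intervalIntegrable x y
    have splitA := intervalIntegral.integral_add_adjacent_intervals (hint a1 a2) (hint a2 (B a1))
    have splitB := intervalIntegral.integral_add_adjacent_intervals (hint a2 (B a2)) (hint (B a2) (B a1))
    have hle1 : ∀ t ∈ Set.Icc a1 (B a1), (c t - c a1) / σhat t ^ 2 ≤ 0 := by
      intro t ht
      have := hcle a1 ha1 t ht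
      exact div_nonpos_of_nonpos_of_nonneg (by linarith) (hσhatsq t).le
    have hI1 : (∫ t in a1..a2, (c t - c a1) / σhat t ^ 2) ≤ 0 := by
      have h0 : (0:ℝ) ≤ ∫ t in a1..a2, -((c t - c a1) / σhat t ^ 2) := by
        apply intervalIntegral.integral_nonneg h12.le
        intro u hu
        have := hle1 u ⟨hu.1, hu.2.trans (by linarith)⟩
        linarith
      rw [intervalIntegral.integral_neg] at h0
      linarith
    have hI3 : (∫ t in (B a2)..(B a1), (c t - c a1) / σhat t ^ 2) ≤ 0 := by
      have h0 : (0:ℝ) ≤ ∫ t in (B a2)..(B a1), -((c t - c a1) / σhat t ^ 2) := by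
        apply intervalIntegral.integral_nonneg hb21.le
        intro u hu
        have := hle1 u ⟨le_trans (by linarith) hu.1, hu.2⟩
        linarith
      rw [intervalIntegral.integral_neg] at h0
      linarith
    have hI2 : (∫ t in a2..(B a2), (c t - c a1) / σhat t ^ 2) <
        ∫ t in a2..(B a2), (c t - c a2) / σhat t ^ 2 := by
      apply intervalIntegral.integral_lt_integral_of_continuousOn_of_le_of_exists_lt
        (ha2.trans hb2pos) (hcontHat (c a1)).continuousOn (hcontHat (c a2)).continuousOn
      · intro x _
        rw [div_le_div_iff₀ (hσhatsq x) (hσhatsq x)]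
        nlinarith [hσhatsq x]
      · refine ⟨a2, ⟨le_refl _, (ha2.trans hb2pos).le⟩, ?_⟩
        rw [div_lt_div_iff₀ (hσhatsq a2) (hσhatsq a2)]
        nlinarith [hσhatsq a2]
    rw [hghat a1, hghat a2]
    linarith [splitA, splitB]
  refine ⟨part1, ?_⟩
  intro astar atil h1 h2 h3 h4
  have hpos : 0 < ghat astar := by
    have := part1 astar h1
    linarith
  have hmain : atil < astar := by
    by_contra h
    push_neg at h
    rcases eq_or_lt_of_le h with he | he
    · rw [he] at hpos; linarith
    · have := ghat_mono astar atil he h3; linarith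
  refine ⟨hmain, ?_⟩
  obtain ⟨hbspos, hbsc⟩ := hB astar h1
  obtain ⟨hbtpos, hbtc⟩ := hB atil h3
  have hc : c astar < c atil := hcanti h3.le h1.le hmain
  exact (hcmono.lt_iff_lt (Set.mem_Ici.mpr hbspos.le) (Set.mem_Ici.mpr hbtpos.le)).mp
    (by rw [hbsc, hbtc]; exact hc)
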